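/- arXiv:1912.05250 — 2 statements merged into one kernel-verified Lean document; each statement's English description precedes it below -/
import Mathlib

section
/- Let α = 1/√(n−1), n ≥ 3, and suppose Q : (0,∞) → ℝ is differentiable with Q' = α − Q·((X−α)² + 1 − α²) for a function X satisfying 0 < X(s) < α for all s > 0, and lim_{s→0⁺} Q(s) = 1/((n−2)α). Then Q(s) < 1/((n−2)α) for all s > 0. -/
open Filter Set

/-- If the derivative at `x` is negative, there is a point just to the left
where `f` is larger. -/
lemma left_bigger {f : ℝ → ℝ} {f' x a : ℝ} (h : HasDerivAt f f' x) (hf' : f' < 0)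
    (ha : a < x) : ∃ s, a < s ∧ s < x ∧ f x < f s := by
  rw [hasDerivAt_iff_tendsto_slope] at h
  have hev : ∀ᶠ y in nhdsWithin x {x}ᶜ, slope f x y < 0 := h.eventually (gt_mem_nhds hf')
  have hev' : ∀ᶠ y in nhdsWithin x (Iio x), slope f x y < 0 :=
    hev.filter_mono (nhdsWithin_mono x (fun y hy => ne_of_lt hy))
  have hmem : Ioo a x ∈ nhdsWithin x (Iio x) :=
    Ioo_mem_nhdsLT_of_mem ⟨ha, le_refl x⟩
  obtain ⟨s, hs1, hs2⟩ := (hev'.and (eventually_of_mem hmem (fun y hy => hy))).exists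
  refine ⟨s, hs2.1, hs2.2, ?_⟩
  rw [slope_def_field, div_neg_iff] at hs1
  rcases hs1 with ⟨h1, h2⟩ | ⟨h1, h2⟩
  · linarith [hs2.1, hs2.2]
  · linarith [hs2.1, hs2.2]

/-- If the derivative at `x` is negative, there is a point just to the right
where `f` is smaller. -/
lemma right_smaller {f : ℝ → ℝ} {f' x b : ℝ} (h : HasDerivAt f f' x) (hf' : f' < 0)
    (hb : x < b) : ∃ s, x < s ∧ s < b ∧ f s < f x := by
  rw [hasDerivAt_iff_tendsto_slope] at h
  have hev : ∀ᶠ y in nhdsWithin x {x}ᶜ, slope f x y < 0 := h.eventually (gt_mem_nhds hf')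
  have hev' : ∀ᶠ y in nhdsWithin x (Ioi x), slope f x y < 0 :=
    hev.filter_mono (nhdsWithin_mono x (fun y hy => (ne_of_gt hy)))
  have hmem : Ioo x b ∈ nhdsWithin x (Ioi x) :=
    Ioo_mem_nhdsGT_of_mem ⟨le_refl x, hb⟩
  obtain ⟨s, hs1, hs2⟩ := (hev'.and (eventually_of_mem hmem (fun y hy => hy))).exists
  refine ⟨s, hs2.1, hs2.2, ?_⟩
  rw [slope_def_field, div_neg_iff] at hs1
  rcases hs1 with ⟨h1, h2⟩ | ⟨h1, h2⟩
  · linarith [hs2.1, hs2.2]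
  · linarith [hs2.1, hs2.2]

/-- Barrier argument: Q stays strictly below 1/((n−2)α). -/
theorem bryant_Q_barrier (n : ℕ) (hn : 3 ≤ n) (α : ℝ) (hα : α = 1 / Real.sqrt (n - 1 : ℝ))
    (Q X : ℝ → ℝ)
    (hQ' : ∀ s > 0, HasDerivAt Q (α - Q s * ((X s - α) ^ 2 + 1 - α ^ 2)) s)
    (hX : ∀ s > 0, 0 < X s ∧ X s < α)
    (hlim : Filter.Tendsto Q (nhdsWithin 0 (Set.Ioi 0))
      (nhds (1 / ((n - 2 : ℝ) * α)))) :
    ∀ s > 0, Q s < 1 / ((n - 2 : ℝ) * α) := by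
  set B : ℝ := 1 / ((n - 2 : ℝ) * α) with hB
  have hn1 : (2:ℝ) ≤ (n:ℝ) - 1 := by
    have : (3:ℝ) ≤ (n:ℝ) := by exact_mod_cast hn
    linarith
  have hn2 : (1:ℝ) ≤ (n:ℝ) - 2 := by linarith
  have hsqrt : 0 < Real.sqrt ((n:ℝ) - 1) := Real.sqrt_pos.mpr (by linarith)
  have hαpos : 0 < α := by rw [hα]; positivity
  have hα2 : α ^ 2 * ((n:ℝ) - 1) = 1 := by
    rw [hα, div_pow, one_pow, Real.sq_sqrt (by linarith : (0:ℝ) ≤ (n:ℝ) - 1)]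
    field_simp
  have hBpos : 0 < B := by
    rw [hB]
    positivity
  have hBα : B * (((n:ℝ) - 2) * α) = 1 := by
    rw [hB]; field_simp
  have hcrit : B * (1 - α ^ 2) = α := by linear_combination α * hBα - B * hα2
  -- key sign fact
  have key : ∀ u, 0 < u → B ≤ Q u → α - Q u * ((X u - α) ^ 2 + 1 - α ^ 2) < 0 := by
    intro u hu hQu
    obtain ⟨hx0, hxα⟩ := hX u hu
    have hsq : 0 < (X u - α) ^ 2 :=
      pow_two_pos_of_ne_zero (sub_ne_zero.mpr (ne_of_lt hxα))
    have hα2lt : α ^ 2 < 1 := by nlinarith [sq_nonneg α]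
    have hfac : 0 < (X u - α) ^ 2 + 1 - α ^ 2 := by nlinarith
    have h1 : B * ((X u - α) ^ 2 + 1 - α ^ 2) ≤ Q u * ((X u - α) ^ 2 + 1 - α ^ 2) :=
      mul_le_mul_of_nonneg_right hQu hfac.le
    nlinarith [mul_pos hBpos hsq]
  -- main argument
  intro s₀ hs₀
  by_contra hcon
  push_neg at hcon
  -- Claim A : Q > B on (0, s₀)
  have claimA : ∀ s ∈ Ioo (0:ℝ) s₀, B < Q s := by
    intro s hs
    by_contra hsle
    push_neg at hsle
    -- get a point s₁ ∈ (0, s₀) with Q s₁ < B strictly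
    obtain ⟨s₁, hs₁0, hs₁lt, hQs₁⟩ : ∃ s₁, 0 < s₁ ∧ s₁ < s₀ ∧ Q s₁ < B := by
      rcases lt_or_eq_of_le hsle with h | h
      · exact ⟨s, hs.1, hs.2, h⟩
      · -- Q s = B, derivative negative, go right
        have hd := hQ' s hs.1
        have hneg := key s hs.1 (le_of_eq h.symm)
        obtain ⟨s₂, h1, h2, h3⟩ := right_smaller hd hneg hs.2
        exact ⟨s₂, lt_trans hs.1 h1, h2, by rw [← h]; exact h3⟩
    -- first time ≥ B after s₁
    set G : Set ℝ := {u ∈ Icc s₁ s₀ | B ≤ Q u} with hG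
    have hGne : G.Nonempty := ⟨s₀, ⟨hs₁lt.le, le_refl _⟩, hcon⟩
    have hcontQ : ContinuousOn Q (Icc s₁ s₀) := fun x hx =>
      (hQ' x (lt_of_lt_of_le hs₁0 hx.1)).continuousAt.continuousWithinAt
    have hGclosed : IsClosed G := by
      have : G = Icc s₁ s₀ ∩ Q ⁻¹' (Ici B) := by
        ext u; simp [hG, Set.mem_sep_iff, and_comm]
      rw [this]
      exact (hcontQ.preimage_isClosed_of_isClosed isClosed_Icc isClosed_Ici)
    have hGcompact : IsCompact G := (isCompact_Icc.of_isClosed_subset hGclosed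
      (fun u hu => hu.1))
    obtain ⟨t, htG, htinf⟩ : ∃ t ∈ G, ∀ u ∈ G, t ≤ u := by
      obtain ⟨t, htG, ht⟩ := hGcompact.exists_isMinOn hGne continuousOn_id
      exact ⟨t, htG, fun u hu => ht hu⟩
    have htpos : 0 < t := lt_of_lt_of_le hs₁0 htG.1.1
    have hts₁ : s₁ < t := by
      rcases lt_or_eq_of_le htG.1.1 with h | h
      · exact h
      · exfalso; rw [← h] at htG; linarith [htG.2]
    -- Q < B on [s₁, t)
    have hbefore : ∀ u, s₁ ≤ u → u < t → Q u < B := by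
      intro u hu1 hu2
      by_contra hub
      push_neg at hub
      have : u ∈ G := ⟨⟨hu1, le_trans hu2.le htG.1.2⟩, hub⟩
      linarith [htinf u this]
    -- derivative at t negative; jump left to get Q > B there
    have hd := hQ' t htpos
    have hneg := key t htpos htG.2
    obtain ⟨u, hu1, hu2, hu3⟩ := left_bigger hd hneg hts₁
    have := hbefore u hu1.le hu2
    linarith [htG.2]
  -- Q strictly decreasing on (0, s₀)
  have hanti : StrictAntiOn Q (Ioo (0:ℝ) s₀) := by
    apply strictAntiOn_of_deriv_neg (convex_Ioo _ _)
    · exact fun x hx => (hQ' x hx.1).continuousAt.continuousWithinAt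
    · intro x hx
      rw [interior_Ioo] at hx
      rw [(hQ' x hx.1).deriv]
      exact key x hx.1 (claimA x hx).le
  set s' : ℝ := s₀ / 2 with hs'
  have hs'mem : s' ∈ Ioo (0:ℝ) s₀ := ⟨by positivity, by linarith⟩
  have hev : ∀ᶠ u in nhdsWithin 0 (Ioi 0), Q s' ≤ Q u := by
    have hmem : Ioo (0:ℝ) s' ∈ nhdsWithin 0 (Ioi 0) :=
      Ioo_mem_nhdsGT_of_mem ⟨le_refl 0, hs'mem.1⟩
    refine eventually_of_mem hmem (fun u hu => ?_)
    exact (hanti ⟨hu.1, lt_trans hu.2 hs'mem.2⟩ hs'mem hu.2).le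
  have : Q s' ≤ B := ge_of_tendsto hlim hev
  have := claimA s' hs'mem
  linarith
end

section
/- Let α ∈ (0,1) and let X, Y : (0,∞) → ℝ solve dX/ds = X³ − X + αY², dY/ds = Y(X² − αX) with 0 < X < α and Y > 0. If Q = X/Y² satisfies Q(s) ≥ 1/((n−2)α) at some point s₀ (where α = 1/√(n−1), n ≥ 3) and X(s₀) < α, then Q'(s₀) < 0. -/
/-- At a point where Q = X/Y² reaches 1/((n−2)α) with X < α, Q is strictly decreasing. -/
theorem bryant_Q_decreasing_at_barrier (n : ℕ) (hn : 3 ≤ n) (α : ℝ)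
    (hα : α = 1 / Real.sqrt (n - 1 : ℝ)) (hα01 : 0 < α ∧ α < 1)
    (X Y : ℝ → ℝ) (hX : ∀ s > 0, 0 < X s ∧ X s < α) (hY : ∀ s > 0, 0 < Y s)
    (hX' : ∀ s > 0, HasDerivAt X (X s ^ 3 - X s + α * Y s ^ 2) s)
    (hY' : ∀ s > 0, HasDerivAt Y (Y s * (X s ^ 2 - α * X s)) s)
    (s₀ : ℝ) (hs₀ : 0 < s₀)
    (hQge : X s₀ / Y s₀ ^ 2 ≥ 1 / ((n - 2 : ℝ) * α))
    (hXlt : X s₀ < α) :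
    deriv (fun s => X s / Y s ^ 2) s₀ < 0 := by
  obtain ⟨hα0, hα1⟩ := hα01
  have hY0 := hY s₀ hs₀
  have hX0 := (hX s₀ hs₀).1
  have hn1 : (1:ℝ) < (n:ℝ) - 1 := by
    have : (3:ℝ) ≤ (n:ℝ) := by exact_mod_cast hn
    linarith
  have hα2 : α ^ 2 = 1 / ((n:ℝ) - 1) := by
    rw [hα, div_pow, one_pow, Real.sq_sqrt (by linarith)]
  have hn2 : (0:ℝ) < (n:ℝ) - 2 := by linarith
  have hkey : (1:ℝ) - α ^ 2 = ((n:ℝ) - 2) * α ^ 2 := by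
    rw [hα2]; field_simp; ring
  have hY2 : (0:ℝ) < Y s₀ ^ 2 := by positivity
  have hQ : Y s₀ ^ 2 ≤ X s₀ * (((n:ℝ) - 2) * α) := by
    rw [ge_iff_le, div_le_div_iff₀ (by positivity) hY2] at hQge
    linarith [hQge]
  have hD : HasDerivAt (fun s => X s / Y s ^ 2)
      (((X s₀ ^ 3 - X s₀ + α * Y s₀ ^ 2) * Y s₀ ^ 2 -
        X s₀ * (2 * Y s₀ ^ 1 * (Y s₀ * (X s₀ ^ 2 - α * X s₀)))) / (Y s₀ ^ 2) ^ 2) s₀ :=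
    (hX' s₀ hs₀).div ((hY' s₀ hs₀).pow 2) (by positivity)
  rw [hD.deriv]
  apply div_neg_of_neg_of_pos _ (by positivity)
  have hsq : 0 < (X s₀ - α) ^ 2 := by
    have h := sub_ne_zero.mpr hXlt.ne
    positivity
  have h1 : α * Y s₀ ^ 2 ≤ X s₀ * (1 - α ^ 2) := by
    rw [hkey]; nlinarith [mul_le_mul_of_nonneg_left hQ hα0.le]
  nlinarith [mul_pos hY2 (mul_pos hX0 hsq), mul_le_mul_of_nonneg_left h1 hY2.le]
end
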